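/- Basic inequality for the debiasing-step lasso: Let X ∈ ℝ^{n×p}, ỹ ∈ ℝ^n, λ₂ > 0, and β^{(0)}, β̄, δ* ∈ ℝ^p; set û = β̄ − (β^{(0)} + δ*) and Σ̂ = X^⊤X/n. Let δ̂ be a minimizer over ℝ^p of G(δ) = (1/(2n))‖ỹ − X(β̄ − δ)‖₂² + λ₂‖δ‖₁, and set v̂ = δ̂ − δ*. If ‖(1/n) X^⊤(ỹ − Xβ^{(0)})‖∞ ≤ λ₂/2, then (1/4) v̂^⊤ Σ̂ v̂ ≤ 2λ₂‖δ*‖₁ − (λ₂/2)‖v̂‖₁ + û^⊤ Σ̂ û. -/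

import Mathlib

/-!
STATEMENT 6: Basic inequality for the debiasing-step lasso.

`X = X^{(0)} ∈ ℝ^{n×p}` is the target design, `ytil` the target surrogate
responses, `βbar = β̂^A` the fusion-step estimator, `δstar = δ^A` the population
bias, `û = βbar − (β^{(0)} + δstar)` the fusion-step error and `Σ̂ = XᵀX/n`.
If `δhat` minimizes `G(δ) = (1/(2n))‖ytil − X(βbar − δ)‖₂² + λ₂‖δ‖₁` and the
event `E₂ : ‖(1/n)Xᵀ(ytil − Xβ^{(0)})‖∞ ≤ λ₂/2` holds, then for
`v̂ = δhat − δstar`: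
`(1/4) v̂ᵀΣ̂v̂ ≤ 2λ₂‖δ*‖₁ − (λ₂/2)‖v̂‖₁ + ûᵀΣ̂û`.
-/

open Matrix Finset

noncomputable section

def l1 {ι : Type*} [Fintype ι] (v : ι → ℝ) : ℝ := ∑ j, |v j|
def l2sq {ι : Type*} [Fintype ι] (v : ι → ℝ) : ℝ := ∑ j, (v j) ^ 2
def linf {ι : Type*} [Fintype ι] (v : ι → ℝ) : ℝ := ⨆ j, |v j|

lemma quad_aux {n p : ℕ} (X : Matrix (Fin n) (Fin p) ℝ) (c : ℝ) (w z : Fin p → ℝ) :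
    w ⬝ᵥ ((c • (Xᵀ * X)) *ᵥ z) = c * ((X *ᵥ w) ⬝ᵥ (X *ᵥ z)) := by
  rw [Matrix.smul_mulVec, dotProduct_smul, smul_eq_mul,
      ← Matrix.mulVec_mulVec, Matrix.dotProduct_mulVec, Matrix.vecMul_transpose]

lemma holder_aux {p : ℕ} (w v : Fin p → ℝ) (M : ℝ) (h : linf w ≤ M) :
    |w ⬝ᵥ v| ≤ M * l1 v := by
  rw [linf] at h
  rw [dotProduct, l1, Finset.mul_sum]
  refine (Finset.abs_sum_le_sum_abs _ _).trans (Finset.sum_le_sum fun j _ => ?_)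
  rw [abs_mul]
  have hj : |w j| ≤ M := le_trans (le_ciSup (Set.Finite.bddAbove (Set.finite_range fun j => |w j|)) j) h
  exact mul_le_mul_of_nonneg_right hj (abs_nonneg _)

lemma psd_aux {n : ℕ} (a b : Fin n → ℝ) (c : ℝ) (hc : 0 ≤ c) :
    c * (a ⬝ᵥ b) ≤ c * (a ⬝ᵥ a) + (c / 4) * (b ⬝ᵥ b) := by
  simp only [dotProduct, Finset.mul_sum, ← Finset.sum_add_distrib]
  refine Finset.sum_le_sum fun i _ => ?_
  nlinarith [sq_nonneg (a i - b i / 2), mul_nonneg hc (sq_nonneg (a i - b i / 2))]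

lemma l1_sub_le {p : ℕ} (x y : Fin p → ℝ) : l1 (x - y) ≤ l1 x + l1 y := by
  rw [l1, l1, l1, ← Finset.sum_add_distrib]
  exact Finset.sum_le_sum fun j _ => abs_sub (x j) (y j)

lemma l2sq_add {n : ℕ} (u w : Fin n → ℝ) :
    l2sq (u + w) = l2sq u + 2 * (u ⬝ᵥ w) + l2sq w := by
  simp only [l2sq, dotProduct, Pi.add_apply, Finset.mul_sum,
    ← Finset.sum_add_distrib]
  exact Finset.sum_congr rfl fun j _ => by ring

theorem debias_lasso_basic_inequality
    {n p : ℕ} (X : Matrix (Fin n) (Fin p) ℝ) (ytil : Fin n → ℝ)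
    (lam2 : ℝ) (hlam2 : 0 < lam2)
    (β0 βbar δstar δhat : Fin p → ℝ)
    (hmin : ∀ δ : Fin p → ℝ,
      (1 / (2 * (n : ℝ))) * l2sq (ytil - X *ᵥ (βbar - δhat)) + lam2 * l1 δhat ≤
      (1 / (2 * (n : ℝ))) * l2sq (ytil - X *ᵥ (βbar - δ)) + lam2 * l1 δ)
    (hE2 : linf ((n : ℝ)⁻¹ • (Xᵀ *ᵥ (ytil - X *ᵥ β0))) ≤ lam2 / 2) :
    (1 / 4) * ((δhat - δstar) ⬝ᵥ (((n : ℝ)⁻¹ • (Xᵀ * X)) *ᵥ (δhat - δstar))) ≤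
      2 * lam2 * l1 δstar - (lam2 / 2) * l1 (δhat - δstar)
      + (βbar - (β0 + δstar)) ⬝ᵥ (((n : ℝ)⁻¹ • (Xᵀ * X)) *ᵥ (βbar - (β0 + δstar))) := by
  set c : ℝ := (n : ℝ)⁻¹ with hcdef
  have hc : 0 ≤ c := inv_nonneg.mpr (Nat.cast_nonneg n)
  set u := βbar - (β0 + δstar) with hu
  set v := δhat - δstar with hv
  set r := ytil - X *ᵥ β0 with hrdef
  set a := X *ᵥ u with ha
  set b := X *ᵥ v with hb
  -- rewrite quadratic forms
  rw [quad_aux, quad_aux, ← ha, ← hb]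
  -- 1/(2n) = c/2
  have h2n : (1 : ℝ) / (2 * (n : ℝ)) = c / 2 := by
    rcases Nat.eq_zero_or_pos n with h | h
    · simp [h, hcdef]
    · have : (0:ℝ) < n := Nat.cast_pos.mpr h
      field_simp [hcdef]
      rw [hcdef, mul_inv_cancel₀ this.ne']
  -- decomposition of residuals
  have hres1 : ytil - X *ᵥ (βbar - δstar) = r - a := by
    have : βbar - δstar = β0 + u := by rw [hu]; ring
    rw [this, Matrix.mulVec_add, hrdef, ha]
    abel
  have hres2 : ytil - X *ᵥ (βbar - δhat) = (r - a) + b := by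
    have : βbar - δhat = (β0 + u) - v := by rw [hu, hv]; ring
    rw [this, Matrix.mulVec_sub, Matrix.mulVec_add, hrdef, ha, hb]
    abel
  -- basic inequality from minimization at δstar
  have hmin' := hmin δstar
  rw [h2n, hres1, hres2, l2sq_add] at hmin'
  have hdot : (r - a) ⬝ᵥ b = r ⬝ᵥ b - a ⬝ᵥ b := sub_dotProduct r a b
  have hexpand : c / 2 * (l2sq (r - a) + 2 * ((r - a) ⬝ᵥ b) + l2sq b)
      = c / 2 * l2sq (r - a) + c * ((r ⬝ᵥ b) - (a ⬝ᵥ b)) + (c / 2) * l2sq b := by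
    rw [hdot]; ring
  have hstep : c * ((r ⬝ᵥ b) - (a ⬝ᵥ b)) + (c / 2) * l2sq b
      ≤ lam2 * l1 δstar - lam2 * l1 δhat := by linarith [hmin', hexpand]
  -- l2sq b = b ⬝ᵥ b
  have hbb : l2sq b = b ⬝ᵥ b := by
    simp [l2sq, dotProduct, sq]
  -- Hölder bound
  have hholder : |(c • (Xᵀ *ᵥ r)) ⬝ᵥ v| ≤ (lam2 / 2) * l1 v :=
    holder_aux _ _ _ hE2
  have hsc : (c • (Xᵀ *ᵥ r)) ⬝ᵥ v = c * (r ⬝ᵥ b) := by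
    rw [smul_dotProduct, smul_eq_mul, hb, Matrix.dotProduct_mulVec,
        ← Matrix.mulVec_transpose, dotProduct_comm]
  have hrb : -(c * (r ⬝ᵥ b)) ≤ (lam2 / 2) * l1 v := by
    rw [← hsc]
    exact le_trans (neg_le_abs _) hholder
  -- PSD bound
  have hpsd : c * (a ⬝ᵥ b) ≤ c * (a ⬝ᵥ a) + (c / 4) * (b ⬝ᵥ b) := psd_aux a b c hc
  -- l1 triangle
  have hl1 : l1 v ≤ l1 δhat + l1 δstar := by
    rw [hv]; exact l1_sub_le δhat δstar
  have hl1' : lam2 * l1 v ≤ lam2 * (l1 δhat + l1 δstar) :=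
    mul_le_mul_of_nonneg_left hl1 hlam2.le
  have hms : c * ((r ⬝ᵥ b) - (a ⬝ᵥ b)) = c * (r ⬝ᵥ b) - c * (a ⬝ᵥ b) := mul_sub c _ _
  have hB1 : c / 2 * l2sq b = 1/2 * (c * (b ⬝ᵥ b)) := by rw [hbb]; ring
  have hB2 : c / 4 * (b ⬝ᵥ b) = 1/4 * (c * (b ⬝ᵥ b)) := by ring
  linarith [hstep, hrb, hpsd, hl1', hms, hB1, hB2]

end
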